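/- arXiv:1501.04893 — 2 statements merged into one kernel-verified Lean document; each statement's English description precedes it below -/
import Mathlib

section
/- Let p be a prime and k, s ≥ 1 integers. Then in ℚ_p: (p^k)^s · H_{p^k}(s) = ∑_{l ≥ 0} binom(−s,l) · p^{s+l} · H_p(s+l) · ∑_{u=1}^{l+1} 𝔹_u^l · (1 − p^{(u+s)k})/(1 − p^{u+s}), the family indexed by l ≥ 0 being summable in ℚ_p. -/
open Finset

/-- The generalized binomial coefficient `binom(−s,l) = (−1)^l · C(s+l−1, l) ∈ ℤ`. -/
def negBinom (s l : ℕ) : ℤ := (-1) ^ l * (Nat.choose (s + l - 1) l : ℤ)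

/-- The Faulhaber coefficient `𝔹_u^l = (1/(l+1))·C(l+1,u)·B_{l+1−u} ∈ ℚ`, with `B_1 = −1/2`. -/
noncomputable def faulhaberB (u l : ℕ) : ℚ :=
  (1 / ((l : ℚ) + 1)) * (Nat.choose (l + 1) u : ℚ) * bernoulli (l + 1 - u)

/-- The depth-one multiple harmonic sum `H_N(s) = ∑_{0<n<N} 1/n^s`, viewed in `ℚ_p`. -/
noncomputable def H1 (p : ℕ) [Fact p.Prime] (N s : ℕ) : ℚ_[p] :=
  ∑ n ∈ Finset.Ioo 0 N, 1 / (n : ℚ_[p]) ^ s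

variable (p : ℕ) [Fact p.Prime]

-- L4
lemma H1_eq_range (N s : ℕ) (hs : 1 ≤ s) :
    H1 p N s = ∑ n ∈ Finset.range N, 1 / (n : ℚ_[p]) ^ s := by
  unfold H1
  apply Finset.sum_subset
  · intro x hx; simp only [mem_Ioo, mem_range] at *; omega
  · intro x hx hnx
    simp only [mem_Ioo, mem_range] at *
    have : x = 0 := by omega
    subst this
    simp [zero_pow (by omega : s ≠ 0)]

-- L2 Faulhaber
lemma faulhaber_sum (l N : ℕ) :
    (∑ m ∈ Finset.range N, (m : ℚ) ^ l)
      = ∑ u ∈ Finset.Icc 1 (l + 1), faulhaberB u l * (N : ℚ) ^ u := by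
  rw [_root_.sum_range_pow]
  apply Finset.sum_nbij' (fun i => l + 1 - i) (fun u => l + 1 - u)
  · intro i hi; simp only [mem_range, mem_Icc] at *; omega
  · intro u hu; simp only [mem_range, mem_Icc] at *; omega
  · intro i hi; simp only [mem_range] at hi; omega
  · intro u hu; simp only [mem_Icc] at hu; omega
  · intro i hi
    simp only [mem_range] at hi
    unfold faulhaberB
    rw [Nat.choose_symm (by omega : i ≤ l + 1), show l + 1 - (l + 1 - i) = i by omega]
    ring

-- L7 geometric
lemma geom_piece (s u k : ℕ) (hu : 1 ≤ u + s) :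
    (1 - (p : ℚ_[p]) ^ ((u + s) * k)) / (1 - (p : ℚ_[p]) ^ (u + s))
      = ∑ j ∈ Finset.range k, ((p : ℚ_[p]) ^ (u + s)) ^ j := by
  have hne : (p : ℚ_[p]) ^ (u + s) ≠ 1 := by
    intro h
    have := congrArg (fun x : ℚ_[p] => ‖x‖) h
    simp only [norm_pow, Padic.norm_p, norm_one] at this
    have hp1 : (1 : ℝ) < p := by exact_mod_cast (Fact.out : p.Prime).one_lt
    have : ((p : ℝ)⁻¹) ^ (u + s) < 1 := by
      apply pow_lt_one₀ (by positivity) _ (by omega)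
      rw [inv_lt_one_iff₀]; right; exact hp1
    simp_all
  rw [geom_sum_eq hne, pow_mul]
  rw [div_eq_div_iff (fun h => hne (sub_eq_zero.mp h).symm) (sub_ne_zero.mpr hne)]
  ring

-- norm of nat not divisible by p
lemma norm_nat_unit {r : ℕ} (h0 : 0 < r) (hrp : r < p) : ‖(r : ℚ_[p])‖ = 1 := by
  have hle : ‖((r : ℤ) : ℚ_[p])‖ ≤ 1 := Padic.norm_int_le_one _
  have : ¬ ((p : ℤ) ∣ (r : ℤ)) := by
    rw [Int.natCast_dvd_natCast]
    intro hd
    exact absurd (Nat.le_of_dvd h0 hd) (by omega)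
  have hlt : ¬ ‖((r : ℤ) : ℚ_[p])‖ < 1 := by
    rw [Int.cast_natCast, Padic.norm_natCast_eq_one_iff.mpr
      ((Nat.Prime.coprime_iff_not_dvd Fact.out).mpr (by exact_mod_cast this))]
    exact lt_irrefl 1
  push_cast at hle hlt
  linarith [lt_or_eq_of_le hle, hlt]

-- L1 binomial series
lemma binom_series (s : ℕ) (hs : 1 ≤ s) {r : ℕ} (h0 : 0 < r) (hrp : r < p) (m : ℕ) :
    HasSum (fun l : ℕ => (negBinom s l : ℚ_[p]) * ((p * m : ℕ) : ℚ_[p]) ^ l / (r : ℚ_[p]) ^ (s + l))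
      (1 / ((r + p * m : ℕ) : ℚ_[p]) ^ s) := by
  obtain ⟨t, rfl⟩ : ∃ t, s = t + 1 := ⟨s - 1, by omega⟩
  have hr1 : ‖(r : ℚ_[p])‖ = 1 := norm_nat_unit p h0 hrp
  have hrne : (r : ℚ_[p]) ≠ 0 := by intro h; rw [h] at hr1; simp at hr1
  set x : ℚ_[p] := -(((p * m : ℕ) : ℚ_[p]) / r) with hx
  have hxnorm : ‖x‖ < 1 := by
    rw [hx, norm_neg, norm_div, hr1, div_one]
    push_cast
    rw [norm_mul]
    calc ‖(p : ℚ_[p])‖ * ‖(m : ℚ_[p])‖ ≤ ‖(p : ℚ_[p])‖ * 1 := by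
          apply mul_le_mul_of_nonneg_left _ (norm_nonneg _)
          exact_mod_cast Padic.norm_int_le_one (m : ℤ)
      _ < 1 := by
          rw [mul_one, Padic.norm_p]
          rw [inv_lt_one_iff₀]; right
          exact_mod_cast (Fact.out : p.Prime).one_lt
  have key := hasSum_choose_mul_geometric_of_norm_lt_one (𝕜 := ℚ_[p]) t hxnorm
  have h1x : (1 : ℚ_[p]) - x = ((r + p * m : ℕ) : ℚ_[p]) / r := by
    rw [hx]; push_cast; field_simp; ring
  have := key.div_const ((r : ℚ_[p]) ^ (t + 1))
  have hBne : ((r + p * m : ℕ) : ℚ_[p]) ≠ 0 := Nat.cast_ne_zero.mpr (by omega)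
  have hfun : (fun l : ℕ =>
      (negBinom (t + 1) l : ℚ_[p]) * ((p * m : ℕ) : ℚ_[p]) ^ l / (r : ℚ_[p]) ^ (t + 1 + l))
      = fun l : ℕ => ((l + t).choose t : ℚ_[p]) * x ^ l / (r : ℚ_[p]) ^ (t + 1) := by
    funext l
    unfold negBinom
    have hc : (t + 1 + l - 1).choose l = (l + t).choose t := by
      rw [show t + 1 + l - 1 = l + t by omega,
        ← Nat.choose_symm (Nat.le_add_right l t), Nat.add_sub_cancel_left]
    rw [hc, hx]
    rw [show (-(((p * m : ℕ) : ℚ_[p]) / r)) ^ l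
      = (-1) ^ l * (((p * m : ℕ) : ℚ_[p]) / r) ^ l from neg_pow _ _, div_pow]
    push_cast
    field_simp
    ring
  have hval : (1 : ℚ_[p]) / (1 - x) ^ (t + 1) / (r : ℚ_[p]) ^ (t + 1)
      = 1 / ((r + p * m : ℕ) : ℚ_[p]) ^ (t + 1) := by
    rw [h1x, div_pow, one_div_div, div_div,
      mul_comm (((r + p * m : ℕ) : ℚ_[p]) ^ (t + 1)), ← div_div,
      div_self (pow_ne_zero _ hrne), one_div]
  rw [hfun, ← hval]
  exact this

-- L3 digit decomposition
lemma digit_sum {M : Type*} [AddCommMonoid M] (f : ℕ → M) (q N : ℕ) :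
    ∑ n ∈ Finset.range (q * N), f n
      = ∑ m ∈ Finset.range N, ∑ r ∈ Finset.range q, f (r + q * m) := by
  induction N with
  | zero => simp
  | succ N ih =>
      rw [Nat.mul_succ, Finset.sum_range_add, ih, Finset.sum_range_succ]
      congr 1
      apply Finset.sum_congr rfl
      intro r _
      rw [Nat.add_comm (q * N) r]

lemma range_eq_insert_Ioo (q : ℕ) (hq : 0 < q) :
    Finset.range q = insert 0 (Finset.Ioo 0 q) := by
  ext x
  simp only [Finset.mem_range, Finset.mem_insert, Finset.mem_Ioo]
  omega

-- L6 step
lemma H1_step (s : ℕ) (hs : 1 ≤ s) (j : ℕ) :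
    (p : ℚ_[p]) ^ (s * (j + 1)) * H1 p (p ^ (j + 1)) s
      - (p : ℚ_[p]) ^ (s * j) * H1 p (p ^ j) s
      = (p : ℚ_[p]) ^ (s * (j + 1)) * ∑ r ∈ Finset.Ioo 0 p, ∑ m ∈ Finset.range (p ^ j),
          1 / ((r + p * m : ℕ) : ℚ_[p]) ^ s := by
  have hp0 : 0 < p := (Fact.out : p.Prime).pos
  have hpne : (p : ℚ_[p]) ≠ 0 := Nat.cast_ne_zero.mpr hp0.ne'
  have hsplit : H1 p (p ^ (j + 1)) s
      = (1 / (p : ℚ_[p]) ^ s) * H1 p (p ^ j) s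
        + ∑ r ∈ Finset.Ioo 0 p, ∑ m ∈ Finset.range (p ^ j),
            1 / ((r + p * m : ℕ) : ℚ_[p]) ^ s := by
    rw [H1_eq_range p _ s hs, pow_succ, mul_comm ((p:ℕ) ^ j) p,
      digit_sum (fun n => 1 / (n : ℚ_[p]) ^ s) p (p ^ j)]
    have hrow : ∀ m : ℕ, (∑ r ∈ Finset.range p, 1 / (((r + p * m : ℕ)) : ℚ_[p]) ^ s)
        = 1 / ((p * m : ℕ) : ℚ_[p]) ^ s
          + ∑ r ∈ Finset.Ioo 0 p, 1 / ((r + p * m : ℕ) : ℚ_[p]) ^ s := by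
      intro m
      rw [range_eq_insert_Ioo p hp0, Finset.sum_insert (by simp)]
      simp
    calc ∑ m ∈ Finset.range (p ^ j), ∑ r ∈ Finset.range p, 1 / (((r + p * m : ℕ)) : ℚ_[p]) ^ s
        = ∑ m ∈ Finset.range (p ^ j), (1 / ((p * m : ℕ) : ℚ_[p]) ^ s
            + ∑ r ∈ Finset.Ioo 0 p, 1 / ((r + p * m : ℕ) : ℚ_[p]) ^ s) := by
          exact Finset.sum_congr rfl fun m _ => hrow m
      _ = (∑ m ∈ Finset.range (p ^ j), 1 / ((p * m : ℕ) : ℚ_[p]) ^ s)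
            + ∑ m ∈ Finset.range (p ^ j), ∑ r ∈ Finset.Ioo 0 p,
                1 / ((r + p * m : ℕ) : ℚ_[p]) ^ s := Finset.sum_add_distrib
      _ = (1 / (p : ℚ_[p]) ^ s) * H1 p (p ^ j) s
            + ∑ r ∈ Finset.Ioo 0 p, ∑ m ∈ Finset.range (p ^ j),
                1 / ((r + p * m : ℕ) : ℚ_[p]) ^ s := by
          rw [Finset.sum_comm, H1_eq_range p _ s hs, Finset.mul_sum]
          congr 1
          apply Finset.sum_congr rfl
          intro m _
          push_cast
          rw [mul_pow, eq_comm, div_mul_div_comm, one_mul]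
  have hps : (p : ℚ_[p]) ^ (s * (j + 1)) * (1 / (p : ℚ_[p]) ^ s) = (p : ℚ_[p]) ^ (s * j) := by
    rw [show s * (j + 1) = s * j + s by ring, pow_add]
    field_simp
  rw [hsplit, mul_add, ← mul_assoc, hps]
  ring

lemma hasSum_D (s : ℕ) (hs : 1 ≤ s) (j : ℕ) :
    HasSum (fun l : ℕ => (negBinom s l : ℚ_[p]) * (p : ℚ_[p]) ^ (s + l) * H1 p p (s + l) *
        ∑ u ∈ Finset.Icc 1 (l + 1), (faulhaberB u l : ℚ_[p]) * (p : ℚ_[p]) ^ ((u + s) * j))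
      ((p : ℚ_[p]) ^ (s * (j + 1)) * ∑ r ∈ Finset.Ioo 0 p, ∑ m ∈ Finset.range (p ^ j),
          1 / ((r + p * m : ℕ) : ℚ_[p]) ^ s) := by
  have hsum : HasSum (fun l : ℕ => ∑ r ∈ Finset.Ioo 0 p, ∑ m ∈ Finset.range (p ^ j),
      (negBinom s l : ℚ_[p]) * ((p * m : ℕ) : ℚ_[p]) ^ l / (r : ℚ_[p]) ^ (s + l))
      (∑ r ∈ Finset.Ioo 0 p, ∑ m ∈ Finset.range (p ^ j),
        1 / ((r + p * m : ℕ) : ℚ_[p]) ^ s) := by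
    apply hasSum_sum
    intro r hr
    simp only [Finset.mem_Ioo] at hr
    exact hasSum_sum fun m _ => binom_series p s hs hr.1 hr.2 m
  have key := hsum.mul_left ((p : ℚ_[p]) ^ (s * (j + 1)))
  have hl : ∀ l : ℕ, (negBinom s l : ℚ_[p]) * (p : ℚ_[p]) ^ (s + l) * H1 p p (s + l) *
        (∑ u ∈ Finset.Icc 1 (l + 1), (faulhaberB u l : ℚ_[p]) * (p : ℚ_[p]) ^ ((u + s) * j))
      = (p : ℚ_[p]) ^ (s * (j + 1)) * ∑ r ∈ Finset.Ioo 0 p, ∑ m ∈ Finset.range (p ^ j),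
          (negBinom s l : ℚ_[p]) * ((p * m : ℕ) : ℚ_[p]) ^ l / (r : ℚ_[p]) ^ (s + l) := by
    intro l
    have hQ := faulhaber_sum l (p ^ j)
    have hC := congrArg (fun q : ℚ => (q : ℚ_[p])) hQ
    push_cast at hC
    have hfaul : ∑ u ∈ Finset.Icc 1 (l + 1), (faulhaberB u l : ℚ_[p]) * (p : ℚ_[p]) ^ ((u + s) * j)
        = (p : ℚ_[p]) ^ (s * j) * ∑ m ∈ Finset.range (p ^ j), (m : ℚ_[p]) ^ l := by
      rw [hC, Finset.mul_sum]
      apply Finset.sum_congr rfl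
      intro u _
      rw [show (u + s) * j = j * u + s * j by ring, pow_add, pow_mul]
      ring
    rw [hfaul]
    simp only [H1, Finset.mul_sum, Finset.sum_mul]
    rw [Finset.sum_comm]
    refine Finset.sum_congr rfl fun r _ => ?_
    refine Finset.sum_congr rfl fun m _ => ?_
    have hpow : (p : ℚ_[p]) ^ (s + l) * (p : ℚ_[p]) ^ (s * j)
        = (p : ℚ_[p]) ^ (s * (j + 1)) * (p : ℚ_[p]) ^ l := by
      rw [← pow_add, ← pow_add]; congr 1; ring
    push_cast
    linear_combination ((negBinom s l : ℚ_[p]) * (m : ℚ_[p]) ^ l *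
      ((r : ℚ_[p]) ^ (s + l))⁻¹) * hpow
  exact (funext hl : _ = _) ▸ key

/-- Depth-one reduction to `H_p`:
`(p^k)^s·H_{p^k}(s) = ∑_{l ≥ 0} binom(−s,l)·p^{s+l}·H_p(s+l)·
  ∑_{u=1}^{l+1} 𝔹_u^l·(1 − p^{(u+s)k})/(1 − p^{u+s})`,
the family indexed by `l` being summable in `ℚ_p`. -/
theorem depth_one_prime_power (p : ℕ) [Fact p.Prime] (k s : ℕ) (hk : 1 ≤ k) (hs : 1 ≤ s) :
    Summable (fun l : ℕ => (negBinom s l : ℚ_[p]) * (p : ℚ_[p]) ^ (s + l) * H1 p p (s + l) *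
        ∑ u ∈ Finset.Icc 1 (l + 1), (faulhaberB u l : ℚ_[p]) *
          (1 - (p : ℚ_[p]) ^ ((u + s) * k)) / (1 - (p : ℚ_[p]) ^ (u + s))) ∧
    ((p : ℚ_[p]) ^ k) ^ s * H1 p (p ^ k) s
      = ∑' l : ℕ, (negBinom s l : ℚ_[p]) * (p : ℚ_[p]) ^ (s + l) * H1 p p (s + l) *
          ∑ u ∈ Finset.Icc 1 (l + 1), (faulhaberB u l : ℚ_[p]) *
            (1 - (p : ℚ_[p]) ^ ((u + s) * k)) / (1 - (p : ℚ_[p]) ^ (u + s)) := by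
  have hFeq : (fun l : ℕ => (negBinom s l : ℚ_[p]) * (p : ℚ_[p]) ^ (s + l) * H1 p p (s + l) *
        ∑ u ∈ Finset.Icc 1 (l + 1), (faulhaberB u l : ℚ_[p]) *
          (1 - (p : ℚ_[p]) ^ ((u + s) * k)) / (1 - (p : ℚ_[p]) ^ (u + s)))
      = fun l : ℕ => ∑ j ∈ Finset.range k,
          ((negBinom s l : ℚ_[p]) * (p : ℚ_[p]) ^ (s + l) * H1 p p (s + l) *
            ∑ u ∈ Finset.Icc 1 (l + 1), (faulhaberB u l : ℚ_[p]) * (p : ℚ_[p]) ^ ((u + s) * j)) := by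
    funext l
    have hu : ∀ u ∈ Finset.Icc 1 (l + 1), (faulhaberB u l : ℚ_[p]) *
        (1 - (p : ℚ_[p]) ^ ((u + s) * k)) / (1 - (p : ℚ_[p]) ^ (u + s))
        = ∑ j ∈ Finset.range k, (faulhaberB u l : ℚ_[p]) * (p : ℚ_[p]) ^ ((u + s) * j) := by
      intro u hu
      rw [mul_div_assoc, geom_piece p s u k (by omega), Finset.mul_sum]
      exact Finset.sum_congr rfl fun j _ => by rw [← pow_mul]
    rw [Finset.sum_congr rfl hu, Finset.sum_comm, Finset.mul_sum]
  have hHS : HasSum (fun l : ℕ => (negBinom s l : ℚ_[p]) * (p : ℚ_[p]) ^ (s + l) *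
        H1 p p (s + l) * ∑ u ∈ Finset.Icc 1 (l + 1), (faulhaberB u l : ℚ_[p]) *
          (1 - (p : ℚ_[p]) ^ ((u + s) * k)) / (1 - (p : ℚ_[p]) ^ (u + s)))
      (∑ j ∈ Finset.range k, (p : ℚ_[p]) ^ (s * (j + 1)) *
        ∑ r ∈ Finset.Ioo 0 p, ∑ m ∈ Finset.range (p ^ j),
          1 / ((r + p * m : ℕ) : ℚ_[p]) ^ s) := by
    rw [hFeq]
    exact hasSum_sum fun j _ => hasSum_D p s hs j
  have htel : ((p : ℚ_[p]) ^ k) ^ s * H1 p (p ^ k) s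
      = ∑ j ∈ Finset.range k, (p : ℚ_[p]) ^ (s * (j + 1)) *
          ∑ r ∈ Finset.Ioo 0 p, ∑ m ∈ Finset.range (p ^ j),
            1 / ((r + p * m : ℕ) : ℚ_[p]) ^ s := by
    calc ((p : ℚ_[p]) ^ k) ^ s * H1 p (p ^ k) s
        = (p : ℚ_[p]) ^ (s * k) * H1 p (p ^ k) s
          - (p : ℚ_[p]) ^ (s * 0) * H1 p (p ^ 0) s := by
          have h0 : (Finset.Ioo 0 1 : Finset ℕ) = ∅ := by decide
          simp [H1, h0, ← pow_mul, mul_comm k s]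
      _ = ∑ j ∈ Finset.range k, ((p : ℚ_[p]) ^ (s * (j + 1)) * H1 p (p ^ (j + 1)) s
            - (p : ℚ_[p]) ^ (s * j) * H1 p (p ^ j) s) :=
          (Finset.sum_range_sub (fun j => (p : ℚ_[p]) ^ (s * j) * H1 p (p ^ j) s) k).symm
      _ = _ := Finset.sum_congr rfl fun j _ => H1_step p s hs j
  exact ⟨hHS.summable, by rw [htel, hHS.tsum_eq]⟩
end

section
/- Let p be a prime and k, s_1, s_2 ≥ 1 integers. Then in ℚ_p: (p^k)^{s_1+s_2} · ∑_{0<n_1<n_2<p^k, v_p(n_1)=v_p(n_2)} n_1^{−s_1} n_2^{−s_2} = p^{s_1+s_2} · ∑_{l_1,l_2 ≥ 0} ∑_{u=1}^{l_1+l_2+2} ((p^{(u+s_1+s_2)k} − 1)/(p^{u+s_1+s_2} − 1)) · p^{l_1+l_2} · binom(−s_1,l_1) · binom(−s_2,l_2) · ( 𝔹_u^{l_2,l_1} · H_p(s_1+l_1) · H_p(s_2+l_2) + 𝔹_u^{l_1+l_2} · H_p(s_2+l_2, s_1+l_1) ), the family being summable in ℚ_p. -/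
open Finset


/-- The depth-two Faulhaber coefficient `𝔹_u^{l_2,l_1} = ∑_{k_1=1}^{l_1+1} 𝔹_{k_1}^{l_1}·𝔹_u^{k_1+l_2}`,
so that `∑_{0≤n_1<n_2<N} n_1^{l_1} n_2^{l_2} = ∑_{u=1}^{l_1+l_2+2} 𝔹_u^{l_2,l_1}·N^u`. -/
noncomputable def faulhaberB2 (u l₂ l₁ : ℕ) : ℚ :=
  ∑ k₁ ∈ Finset.Icc 1 (l₁ + 1), faulhaberB k₁ l₁ * faulhaberB u (k₁ + l₂)

/-- The depth-two multiple harmonic sum `H_N(s_2,s_1) = ∑_{0<n_1<n_2<N} 1/(n_1^{s_1} n_2^{s_2})`,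
viewed in `ℚ_p`. -/
noncomputable def H2 (p : ℕ) [Fact p.Prime] (N s₁ s₂ : ℕ) : ℚ_[p] :=
  ∑ n₂ ∈ Finset.Ioo 0 N, ∑ n₁ ∈ Finset.Ioo 0 n₂, 1 / ((n₁ : ℚ_[p]) ^ s₁ * (n₂ : ℚ_[p]) ^ s₂)

section Aux
variable {p : ℕ} [hp : Fact p.Prime]

lemma norm_nat_le_one (n : ℕ) : ‖(n : ℚ_[p])‖ ≤ 1 := by
  have := Padic.norm_int_le_one (p := p) (n : ℤ)
  simpa using this

lemma summable_binom_mul (s : ℕ) {x : ℚ_[p]} (hx : ‖x‖ < 1) :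
    Summable (fun l => ((s + l).choose l : ℚ_[p]) * x ^ l) := by
  apply Summable.of_norm_bounded
    (summable_geometric_of_lt_one (norm_nonneg x) hx)
  intro l
  rw [norm_mul, norm_pow]
  have h1 : ‖((s + l).choose l : ℚ_[p])‖ ≤ 1 := norm_nat_le_one _
  have h2 : (0:ℝ) ≤ ‖x‖ ^ l := pow_nonneg (norm_nonneg x) l
  nlinarith [norm_nonneg (((s + l).choose l : ℚ_[p]))]

lemma one_sub_pow_mul_tsum (s : ℕ) {x : ℚ_[p]} (hx : ‖x‖ < 1) :
    (1 - x) ^ (s + 1) * ∑' l, ((s + l).choose l : ℚ_[p]) * x ^ l = 1 := by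
  induction s with
  | zero =>
    have hne : (1 : ℚ_[p]) - x ≠ 0 := by
      intro h
      rw [sub_eq_zero] at h
      rw [← h] at hx
      simp at hx
    have he : ∀ l : ℕ, (((0 + l).choose l : ℕ) : ℚ_[p]) * x ^ l = x ^ l := by
      intro l; simp
    rw [tsum_congr he, tsum_geometric_of_norm_lt_one hx, Nat.zero_add, pow_one,
      mul_inv_cancel₀ hne]
  | succ s ih =>
    have hs1 := summable_binom_mul (p := p) (s + 1) hx
    have hs0 := summable_binom_mul (p := p) s hx
    have h2 : Summable (fun l => ((s + 1 + l).choose l : ℚ_[p]) * x ^ (l + 1)) := by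
      simpa [mul_assoc, pow_succ] using hs1.mul_right x
    have key : (1 - x) * (∑' l, ((s + 1 + l).choose l : ℚ_[p]) * x ^ l)
        = ∑' l, ((s + l).choose l : ℚ_[p]) * x ^ l := by
      have hx1 : x * (∑' l, ((s + 1 + l).choose l : ℚ_[p]) * x ^ l)
          = ∑' l, ((s + 1 + l).choose l : ℚ_[p]) * x ^ (l + 1) := by
        rw [← tsum_mul_left]
        exact tsum_congr fun l => by ring
      set d : ℕ → ℚ_[p] :=
        fun l => if l = 0 then 0 else ((s + l).choose (l - 1) : ℚ_[p]) * x ^ l with hd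
      have hdsum : Summable d := by
        apply Summable.of_norm_bounded
          (summable_geometric_of_lt_one (norm_nonneg x) hx)
        intro l
        by_cases h : l = 0
        · simp only [hd, h, if_pos rfl, norm_zero]
          positivity
        · simp only [hd, if_neg h, norm_mul, norm_pow]
          have h1 : ‖((s + l).choose (l - 1) : ℚ_[p])‖ ≤ 1 := norm_nat_le_one _
          have h2 : (0:ℝ) ≤ ‖x‖ ^ l := pow_nonneg (norm_nonneg x) l
          nlinarith [norm_nonneg (((s + l).choose (l - 1) : ℚ_[p]))]
      have hdt : ∑' l, d l = ∑' l, ((s + 1 + l).choose l : ℚ_[p]) * x ^ (l + 1) := by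
        rw [hdsum.tsum_eq_zero_add]
        have : d 0 = 0 := by simp [hd]
        rw [this, zero_add]
        exact tsum_congr fun m => by
          simp only [hd, Nat.add_sub_cancel, if_neg (Nat.succ_ne_zero m)]
          congr 3
          omega
      rw [sub_mul, one_mul, hx1, ← hdt, ← hs1.tsum_sub hdsum]
      apply tsum_congr
      intro l
      match l with
      | 0 => simp [hd]
      | m + 1 =>
        simp only [hd, if_neg (Nat.succ_ne_zero m), Nat.add_sub_cancel]
        have hpas : (s + 1 + (m + 1)).choose (m + 1)
            = (s + (m + 1)).choose m + (s + (m + 1)).choose (m + 1) := by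
          rw [show s + 1 + (m + 1) = (s + (m + 1)) + 1 from by omega]
          exact Nat.choose_succ_succ _ _
        rw [hpas]
        push_cast
        ring
    calc (1 - x) ^ (s + 1 + 1) * ∑' l, ((s + 1 + l).choose l : ℚ_[p]) * x ^ l
        = (1 - x) ^ (s + 1) * ((1 - x) * ∑' l, ((s + 1 + l).choose l : ℚ_[p]) * x ^ l) := by
          ring
      _ = 1 := by rw [key, ih]

lemma norm_coe_unit_eq_one {a : ℕ} (ha0 : 0 < a) (ha : ¬ p ∣ a) : ‖(a : ℚ_[p])‖ = 1 := by
  have h1 : ‖((a : ℤ) : ℚ_[p])‖ ≤ 1 := Padic.norm_int_le_one _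
  have h2 : ¬ ‖((a : ℤ) : ℚ_[p])‖ < 1 := by
    rw [Padic.norm_intCast_lt_one_iff]
    exact_mod_cast ha
  push_cast at h1 h2
  linarith

lemma norm_p_mul_nat_lt_one (n : ℕ) : ‖(p : ℚ_[p]) * n‖ < 1 := by
  rw [norm_mul]
  have h1 : ‖(p : ℚ_[p])‖ < 1 := Padic.norm_p_lt_one
  have h2 : ‖(n : ℚ_[p])‖ ≤ 1 := norm_nat_le_one n
  have h3 : (0:ℝ) ≤ ‖(p : ℚ_[p])‖ := norm_nonneg _
  nlinarith [norm_nonneg ((n : ℚ_[p]))]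

lemma summable_expansion (s : ℕ) {a : ℕ} (ha0 : 0 < a) (ha : ¬ p ∣ a) (n : ℕ) :
    Summable (fun l => (negBinom s l : ℚ_[p]) * p ^ l * n ^ l * (1 / (a : ℚ_[p]) ^ (s + l))) := by
  apply Summable.of_norm_bounded
    (summable_geometric_of_lt_one (norm_nonneg _) (norm_p_mul_nat_lt_one (p := p) n))
  intro l
  have hb : ‖((negBinom s l : ℤ) : ℚ_[p])‖ ≤ 1 := Padic.norm_int_le_one _
  have han : ‖(a : ℚ_[p])‖ = 1 := norm_coe_unit_eq_one ha0 ha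
  have h1 : ‖(1 / (a : ℚ_[p]) ^ (s + l))‖ = 1 := by
    rw [norm_div, norm_one, norm_pow, han, one_pow, div_one]
  calc ‖(negBinom s l : ℚ_[p]) * p ^ l * n ^ l * (1 / (a : ℚ_[p]) ^ (s + l))‖
      = ‖((negBinom s l : ℤ) : ℚ_[p])‖ * (‖(p : ℚ_[p])‖ ^ l * ‖(n : ℚ_[p])‖ ^ l) * 1 := by
        rw [norm_mul, norm_mul, norm_mul, h1, norm_pow, norm_pow]; push_cast; ring
    _ ≤ 1 * (‖(p : ℚ_[p])‖ ^ l * ‖(n : ℚ_[p])‖ ^ l) * 1 := by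
        apply mul_le_mul_of_nonneg_right (mul_le_mul_of_nonneg_right hb (by positivity)) zero_le_one
    _ = (‖(p : ℚ_[p])‖ * ‖(n : ℚ_[p])‖) ^ l := by rw [mul_pow]; ring
    _ = ‖(p : ℚ_[p]) * n‖ ^ l := by rw [norm_mul]

lemma inv_pow_expansion (s : ℕ) (hs : 1 ≤ s) {a : ℕ} (ha0 : 0 < a) (ha : ¬ p ∣ a) (n : ℕ) :
    1 / ((p : ℚ_[p]) * n + a) ^ s
      = ∑' l, (negBinom s l : ℚ_[p]) * p ^ l * n ^ l * (1 / (a : ℚ_[p]) ^ (s + l)) := by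
  have hane : (a : ℚ_[p]) ≠ 0 := by
    exact_mod_cast Nat.cast_ne_zero.mpr ha0.ne'
  set x : ℚ_[p] := -((p : ℚ_[p]) * n / a) with hxdef
  have hx : ‖x‖ < 1 := by
    rw [hxdef, norm_neg, norm_div, norm_coe_unit_eq_one ha0 ha, div_one]
    exact norm_p_mul_nat_lt_one n
  have hfac : (p : ℚ_[p]) * n + a = a * (1 - x) := by
    rw [hxdef]; field_simp; ring
  have hone : (1 - x) ^ s * ∑' l, (((s - 1) + l).choose l : ℚ_[p]) * x ^ l = 1 := by
    have := one_sub_pow_mul_tsum (p := p) (s - 1) hx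
    rwa [Nat.sub_add_cancel hs] at this
  have hxne : (1 - x) ≠ 0 := by
    intro h
    rw [sub_eq_zero] at h
    rw [← h] at hx
    simp at hx
  have hinv : 1 / (1 - x) ^ s = ∑' l, (((s - 1) + l).choose l : ℚ_[p]) * x ^ l := by
    rw [eq_comm, eq_div_iff (pow_ne_zero s hxne), mul_comm]
    exact hone
  rw [hfac, mul_pow, one_div, mul_inv, ← one_div, ← one_div, hinv, ← tsum_mul_left]
  apply tsum_congr
  intro l
  rw [hxdef]
  have hchoose : ((s - 1) + l).choose l = (s + l - 1).choose l := by
    congr 1; omega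
  rw [hchoose]
  show 1 / (a:ℚ_[p]) ^ s * (((s + l - 1).choose l : ℚ_[p]) * (-((p : ℚ_[p]) * n / a)) ^ l) = _
  rw [neg_pow, div_pow, mul_pow]
  simp only [negBinom]
  push_cast
  field_simp
  ring

lemma faulhaberB_eq_zero {u l : ℕ} (h : l + 1 < u) : faulhaberB u l = 0 := by
  rw [faulhaberB, Nat.choose_eq_zero_of_lt h]
  simp

lemma faulhaber_rat (N l : ℕ) :
    (∑ n ∈ range N, (n : ℚ) ^ l) = ∑ u ∈ Icc 1 (l + 1), faulhaberB u l * (N : ℚ) ^ u := by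
  rw [sum_range_pow]
  apply Finset.sum_nbij' (fun i => l + 1 - i) (fun u => l + 1 - u)
  · intro i hi
    simp only [mem_range] at hi
    simp only [mem_Icc]
    omega
  · intro u hu
    simp only [mem_Icc] at hu
    simp only [mem_range]
    omega
  · intro i hi
    simp only [mem_range] at hi
    omega
  · intro u hu
    simp only [mem_Icc] at hu
    omega
  · intro i hi
    simp only [mem_range] at hi
    rw [faulhaberB]
    have h1 : l + 1 - (l + 1 - i) = i := by omega
    have h2 : (l + 1).choose (l + 1 - i) = (l + 1).choose i := Nat.choose_symm (by omega)
    rw [h1, h2]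
    ring

lemma faulhaber_padic (N l L : ℕ) (hL : l + 1 ≤ L) :
    (∑ n ∈ range N, (n : ℚ_[p]) ^ l) = ∑ u ∈ Icc 1 L, (faulhaberB u l : ℚ_[p]) * (N : ℚ_[p]) ^ u := by
  have h1 : (∑ u ∈ Icc 1 L, (faulhaberB u l : ℚ_[p]) * (N : ℚ_[p]) ^ u)
      = ∑ u ∈ Icc 1 (l + 1), (faulhaberB u l : ℚ_[p]) * (N : ℚ_[p]) ^ u := by
    refine (Finset.sum_subset ?_ ?_).symm
    · intro u hu; simp only [mem_Icc] at *; omega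
    · intro u hu hnu
      simp only [mem_Icc] at hu hnu
      have : l + 1 < u := by omega
      rw [faulhaberB_eq_zero this]
      simp
  rw [h1]
  have := faulhaber_rat N l
  have hcast := congrArg (fun q : ℚ => (q : ℚ_[p])) this
  push_cast at hcast
  convert hcast using 2 <;> push_cast <;> ring_nf

lemma faulhaber2_padic (N l₁ l₂ : ℕ) :
    (∑ n₂ ∈ range N, ∑ n₁ ∈ range n₂, (n₁ : ℚ_[p]) ^ l₁ * (n₂ : ℚ_[p]) ^ l₂)
      = ∑ u ∈ Icc 1 (l₁ + l₂ + 2), (faulhaberB2 u l₂ l₁ : ℚ_[p]) * (N : ℚ_[p]) ^ u := by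
  have step1 : ∀ n₂ : ℕ, (∑ n₁ ∈ range n₂, (n₁ : ℚ_[p]) ^ l₁ * (n₂ : ℚ_[p]) ^ l₂)
      = ∑ k₁ ∈ Icc 1 (l₁ + 1), (faulhaberB k₁ l₁ : ℚ_[p]) * (n₂ : ℚ_[p]) ^ (k₁ + l₂) := by
    intro n₂
    rw [← Finset.sum_mul, faulhaber_padic n₂ l₁ (l₁ + 1) le_rfl, Finset.sum_mul]
    exact Finset.sum_congr rfl fun k₁ _ => by rw [pow_add]; ring
  rw [Finset.sum_congr rfl fun n₂ _ => step1 n₂, Finset.sum_comm]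
  have step2 : ∀ k₁ ∈ Icc 1 (l₁ + 1),
      (∑ n₂ ∈ range N, (faulhaberB k₁ l₁ : ℚ_[p]) * (n₂ : ℚ_[p]) ^ (k₁ + l₂))
      = ∑ u ∈ Icc 1 (l₁ + l₂ + 2),
          (faulhaberB k₁ l₁ : ℚ_[p]) * ((faulhaberB u (k₁ + l₂) : ℚ_[p]) * (N : ℚ_[p]) ^ u) := by
    intro k₁ hk₁
    simp only [mem_Icc] at hk₁
    rw [← Finset.mul_sum, ← Finset.mul_sum,
      faulhaber_padic N (k₁ + l₂) (l₁ + l₂ + 2) (by omega)]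
  rw [Finset.sum_congr rfl step2, Finset.sum_comm]
  apply Finset.sum_congr rfl
  intro u _
  rw [faulhaberB2]
  push_cast
  rw [Finset.sum_mul]
  exact Finset.sum_congr rfl fun k₁ _ => by ring

lemma val_decomp (k : ℕ) (f : ℕ → ℕ → ℚ_[p]) :
    (∑ n₂ ∈ Ioo 0 (p ^ k), ∑ n₁ ∈ (Ioo 0 n₂).filter
        (fun n₁ => padicValNat p n₁ = padicValNat p n₂), f n₁ n₂)
      = ∑ j ∈ range k, ∑ m₂ ∈ (Ioo 0 (p ^ (k - j))).filter (fun m => ¬ p ∣ m),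
          ∑ m₁ ∈ (Ioo 0 m₂).filter (fun m => ¬ p ∣ m), f (p ^ j * m₁) (p ^ j * m₂) := by
  have hp1 : 1 < p := hp.out.one_lt
  rw [Finset.sum_sigma']
  conv_rhs => rw [Finset.sum_congr rfl (fun j _ => Finset.sum_sigma'
    ((Ioo 0 (p ^ (k - j))).filter (fun m => ¬ p ∣ m))
    (fun m₂ => (Ioo 0 m₂).filter (fun m => ¬ p ∣ m))
    (fun m₂ m₁ => f (p ^ j * m₁) (p ^ j * m₂)))]
  rw [Finset.sum_sigma']
  apply Finset.sum_nbij'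
    (i := fun x => ⟨padicValNat p x.1, ⟨x.1 / p ^ padicValNat p x.1,
        x.2 / p ^ padicValNat p x.1⟩⟩)
    (j := fun y => ⟨p ^ y.1 * y.2.1, p ^ y.1 * y.2.2⟩)
  · rintro ⟨n₂, n₁⟩ hx
    simp only [mem_sigma, mem_Ioo, mem_filter, mem_range] at hx ⊢
    obtain ⟨⟨h0, hk'⟩, ⟨h1, h12⟩, hv⟩ := hx
    have hd2 : p ^ padicValNat p n₂ ∣ n₂ := pow_padicValNat_dvd
    have hd1 : p ^ padicValNat p n₂ ∣ n₁ := by rw [← hv]; exact pow_padicValNat_dvd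
    have hjk : padicValNat p n₂ < k := by
      have h1' : p ^ padicValNat p n₂ ≤ n₂ := Nat.le_of_dvd h0 hd2
      exact (Nat.pow_lt_pow_iff_right hp1).mp (lt_of_le_of_lt h1' hk')
    have hpj : 0 < p ^ padicValNat p n₂ := Nat.pow_pos (by omega)
    refine ⟨hjk, ⟨⟨?_, ?_⟩, ?_⟩, ⟨?_, ?_⟩, ?_⟩
    · exact Nat.div_pos (Nat.le_of_dvd h0 hd2) hpj
    · rw [Nat.div_lt_iff_lt_mul hpj]
      calc n₂ < p ^ k := hk'
        _ = p ^ (k - padicValNat p n₂) * p ^ padicValNat p n₂ := by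
            rw [← pow_add]; congr 1; omega
    · intro hdvd
      obtain ⟨t, ht⟩ := hdvd
      refine pow_succ_padicValNat_not_dvd (p := p) (by omega : n₂ ≠ 0) ?_
      have hre : n₂ = p ^ padicValNat p n₂ * (n₂ / p ^ padicValNat p n₂) :=
        (Nat.mul_div_cancel' hd2).symm
      rw [ht] at hre
      refine ⟨t, ?_⟩
      conv_lhs => rw [hre]
      ring
    · exact Nat.div_pos (Nat.le_of_dvd (by omega) hd1) hpj
    · exact Nat.div_lt_div_of_lt_of_dvd hd2 h12
    · intro hdvd
      obtain ⟨t, ht⟩ := hdvd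
      refine pow_succ_padicValNat_not_dvd (p := p) (by omega : n₁ ≠ 0) ?_
      rw [hv]
      have hre : n₁ = p ^ padicValNat p n₂ * (n₁ / p ^ padicValNat p n₂) :=
        (Nat.mul_div_cancel' hd1).symm
      rw [ht] at hre
      refine ⟨t, ?_⟩
      conv_lhs => rw [hre]
      ring
  · rintro ⟨j, m₂, m₁⟩ hy
    simp only [mem_sigma, mem_Ioo, mem_filter, mem_range] at hy ⊢
    obtain ⟨hjk, ⟨⟨h20, h2k⟩, h2d⟩, ⟨h10, h12⟩, h1d⟩ := hy
    have hpj : 0 < p ^ j := Nat.pow_pos (by omega)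
    refine ⟨⟨by positivity, ?_⟩, ⟨by positivity, ?_⟩, ?_⟩
    · calc p ^ j * m₂ < p ^ j * p ^ (k - j) := (Nat.mul_lt_mul_left hpj).mpr h2k
        _ = p ^ k := by rw [← pow_add]; congr 1; omega
    · exact (Nat.mul_lt_mul_left hpj).mpr h12
    · rw [padicValNat.mul (by positivity) (by omega), padicValNat.mul (by positivity) (by omega),
        padicValNat.eq_zero_of_not_dvd h1d, padicValNat.eq_zero_of_not_dvd h2d]
  · rintro ⟨n₂, n₁⟩ hx
    simp only [mem_sigma, mem_Ioo, mem_filter] at hx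
    obtain ⟨⟨h0, hk'⟩, ⟨h1, h12⟩, hv⟩ := hx
    have hd2 : p ^ padicValNat p n₂ ∣ n₂ := pow_padicValNat_dvd
    have hd1 : p ^ padicValNat p n₂ ∣ n₁ := by rw [← hv]; exact pow_padicValNat_dvd
    simp only
    rw [Nat.mul_div_cancel' hd2, Nat.mul_div_cancel' hd1]
  · rintro ⟨j, m₂, m₁⟩ hy
    simp only [mem_sigma, mem_Ioo, mem_filter, mem_range] at hy
    obtain ⟨hjk, ⟨⟨h20, h2k⟩, h2d⟩, ⟨h10, h12⟩, h1d⟩ := hy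
    have hpj : 0 < p ^ j := Nat.pow_pos (by omega)
    have hv2 : padicValNat p (p ^ j * m₂) = j := by
      rw [padicValNat.mul (by positivity) (by omega), padicValNat.eq_zero_of_not_dvd h2d,
        padicValNat.prime_pow, add_zero]
    simp only [hv2]
    rw [Nat.mul_div_cancel_left _ hpj, Nat.mul_div_cancel_left _ hpj]
  · rintro ⟨n₂, n₁⟩ hx
    simp only [mem_sigma, mem_Ioo, mem_filter] at hx
    obtain ⟨⟨h0, hk'⟩, ⟨h1, h12⟩, hv⟩ := hx
    have hd2 : p ^ padicValNat p n₂ ∣ n₂ := pow_padicValNat_dvd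
    have hd1 : p ^ padicValNat p n₂ ∣ n₁ := by rw [← hv]; exact pow_padicValNat_dvd
    simp only
    rw [Nat.mul_div_cancel' hd2, Nat.mul_div_cancel' hd1]

lemma unit_filter_eq (N : ℕ) :
    (Ioo 0 N).filter (fun m => ¬ p ∣ m) = (range N).filter (fun m => ¬ p ∣ m) := by
  ext m
  simp only [mem_filter, mem_Ioo, mem_range]
  constructor
  · rintro ⟨⟨h1, h2⟩, h3⟩; exact ⟨h2, h3⟩
  · rintro ⟨h1, h3⟩
    refine ⟨⟨?_, h1⟩, h3⟩
    rcases Nat.eq_zero_or_pos m with h | h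
    · exfalso; exact h3 (h ▸ dvd_zero p)
    · exact h

lemma unit_sum_reindex (g : ℕ → ℚ_[p]) (M : ℕ) :
    (∑ m ∈ (Ioo 0 (p * M)).filter (fun m => ¬ p ∣ m), g m)
      = ∑ n ∈ range M, ∑ a ∈ Ioo 0 p, g (p * n + a) := by
  have hp1 : 1 < p := hp.out.one_lt
  rw [unit_filter_eq, Finset.sum_sigma']
  apply Finset.sum_nbij' (i := fun m => (⟨m / p, m % p⟩ : (_ : ℕ) × ℕ))
    (j := fun x => p * x.1 + x.2)
  · intro m hm
    simp only [mem_filter, mem_range, mem_sigma, mem_Ioo] at hm ⊢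
    obtain ⟨hlt, hnd⟩ := hm
    refine ⟨?_, ?_, ?_⟩
    · exact Nat.div_lt_of_lt_mul (by omega)
    · rcases Nat.eq_zero_or_pos (m % p) with h | h
      · exact absurd (Nat.dvd_of_mod_eq_zero h) hnd
      · exact h
    · exact Nat.mod_lt m (by omega)
  · rintro ⟨n, a⟩ hx
    simp only [mem_sigma, mem_range, mem_Ioo, mem_filter] at hx ⊢
    obtain ⟨hn, ha0, hap⟩ := hx
    constructor
    · calc p * n + a < p * n + p := by omega
        _ ≤ p * M := by
            have : n + 1 ≤ M := hn
            calc p * n + p = p * (n + 1) := by ring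
              _ ≤ p * M := Nat.mul_le_mul_left p this
    · intro hdvd
      have : p ∣ a := (Nat.dvd_add_right ⟨n, rfl⟩).mp hdvd
      have := Nat.le_of_dvd ha0 this
      omega
  · intro m hm
    simp only [mem_filter, mem_range] at hm
    exact Nat.div_add_mod' m p ▸ by rw [Nat.div_add_mod]
  · rintro ⟨n, a⟩ hx
    simp only [mem_sigma, mem_range, mem_Ioo] at hx
    obtain ⟨hn, ha0, hap⟩ := hx
    have h1 : (p * n + a) / p = n := by
      rw [Nat.mul_add_div (by omega), Nat.div_eq_of_lt hap, add_zero]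
    have h2 : (p * n + a) % p = a := by
      rw [Nat.mul_add_mod, Nat.mod_eq_of_lt hap]
    simp only [h1, h2]
  · intro m hm
    simp only
    rw [Nat.div_add_mod]

lemma unit_sum_reindex' (g : ℕ → ℚ_[p]) {n₂ a₂ : ℕ} (ha₂0 : 0 < a₂) (ha₂p : a₂ < p) :
    (∑ m ∈ (Ioo 0 (p * n₂ + a₂)).filter (fun m => ¬ p ∣ m), g m)
      = (∑ n ∈ range n₂, ∑ a ∈ Ioo 0 p, g (p * n + a)) + ∑ a ∈ Ioo 0 a₂, g (p * n₂ + a) := by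
  have hp1 : 1 < p := hp.out.one_lt
  rw [unit_filter_eq, Finset.sum_filter, range_eq_Ico,
    ← Finset.sum_Ico_consecutive _ (Nat.zero_le (p * n₂)) (Nat.le_add_right _ _)]
  congr 1
  · rw [← range_eq_Ico, ← Finset.sum_filter, ← unit_filter_eq, unit_sum_reindex g n₂]
  · rw [Finset.sum_Ico_eq_sum_range]
    simp only [Nat.add_sub_cancel_left]
    rw [← Finset.sum_filter]
    apply Finset.sum_congr
    · ext a
      simp only [mem_filter, mem_range, mem_Ioo]
      constructor
      · rintro ⟨h1, h2⟩
        refine ⟨?_, h1⟩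
        rcases Nat.eq_zero_or_pos a with h | h
        · exfalso; exact h2 (by simp [h])
        · exact h
      · rintro ⟨h1, h2⟩
        refine ⟨h2, fun hdvd => ?_⟩
        have : p ∣ a := (Nat.dvd_add_right ⟨n₂, rfl⟩).mp hdvd
        have := Nat.le_of_dvd h1 this
        omega
    · intro a _
      rfl

noncomputable def eterm (p : ℕ) [Fact p.Prime] (s a n l : ℕ) : ℚ_[p] :=
  (negBinom s l : ℚ_[p]) * (p : ℚ_[p]) ^ l * (n : ℚ_[p]) ^ l * (1 / (a : ℚ_[p]) ^ (s + l))

lemma not_dvd_of_mem_Ioo {a : ℕ} (ha : a ∈ Ioo 0 p) : ¬ p ∣ a := by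
  simp only [mem_Ioo] at ha
  intro h
  have := Nat.le_of_dvd ha.1 h
  omega

lemma eterm_norm_le (s : ℕ) {a : ℕ} (ha0 : 0 < a) (ha : ¬ p ∣ a) (n l : ℕ) :
    ‖eterm p s a n l‖ ≤ ‖(p : ℚ_[p]) * n‖ ^ l := by
  have hb : ‖((negBinom s l : ℤ) : ℚ_[p])‖ ≤ 1 := Padic.norm_int_le_one _
  have han : ‖(a : ℚ_[p])‖ = 1 := norm_coe_unit_eq_one ha0 ha
  have h1 : ‖(1 / (a : ℚ_[p]) ^ (s + l))‖ = 1 := by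
    rw [norm_div, norm_one, norm_pow, han, one_pow, div_one]
  calc ‖eterm p s a n l‖
      = ‖((negBinom s l : ℤ) : ℚ_[p])‖ * (‖(p : ℚ_[p])‖ ^ l * ‖(n : ℚ_[p])‖ ^ l) * 1 := by
        rw [eterm, norm_mul, norm_mul, norm_mul, h1, norm_pow, norm_pow]; push_cast; ring
    _ ≤ 1 * (‖(p : ℚ_[p])‖ ^ l * ‖(n : ℚ_[p])‖ ^ l) * 1 := by
        apply mul_le_mul_of_nonneg_right (mul_le_mul_of_nonneg_right hb (by positivity)) zero_le_one
    _ = (‖(p : ℚ_[p])‖ * ‖(n : ℚ_[p])‖) ^ l := by rw [mul_pow]; ring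
    _ = ‖(p : ℚ_[p]) * n‖ ^ l := by rw [norm_mul]

lemma summable_norm_eterm (s : ℕ) {a : ℕ} (ha0 : 0 < a) (ha : ¬ p ∣ a) (n : ℕ) :
    Summable (fun l => ‖eterm p s a n l‖) :=
  Summable.of_nonneg_of_le (fun l => norm_nonneg _) (fun l => eterm_norm_le s ha0 ha n l)
    (summable_geometric_of_lt_one (norm_nonneg _) (norm_p_mul_nat_lt_one n))

lemma summable_eterm_pair (s₁ s₂ : ℕ) {a₁ a₂ : ℕ} (ha₁ : a₁ ∈ Ioo 0 p) (ha₂ : a₂ ∈ Ioo 0 p)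
    (n₁ n₂ : ℕ) :
    Summable (fun x : ℕ × ℕ => eterm p s₁ a₁ n₁ x.1 * eterm p s₂ a₂ n₂ x.2) := by
  simp only [mem_Ioo] at ha₁ ha₂
  exact summable_mul_of_summable_norm
    (summable_norm_eterm s₁ ha₁.1 (not_dvd_of_mem_Ioo (by simp [mem_Ioo]; omega)) n₁)
    (summable_norm_eterm s₂ ha₂.1 (not_dvd_of_mem_Ioo (by simp [mem_Ioo]; omega)) n₂)

lemma expand_pair (s₁ s₂ : ℕ) (hs₁ : 1 ≤ s₁) (hs₂ : 1 ≤ s₂) {a₁ a₂ : ℕ}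
    (ha₁ : a₁ ∈ Ioo 0 p) (ha₂ : a₂ ∈ Ioo 0 p) (n₁ n₂ : ℕ) :
    1 / (((p * n₁ + a₁ : ℕ) : ℚ_[p]) ^ s₁ * ((p * n₂ + a₂ : ℕ) : ℚ_[p]) ^ s₂)
      = ∑' x : ℕ × ℕ, eterm p s₁ a₁ n₁ x.1 * eterm p s₂ a₂ n₂ x.2 := by
  have hd₁ := not_dvd_of_mem_Ioo ha₁
  have hd₂ := not_dvd_of_mem_Ioo ha₂
  simp only [mem_Ioo] at ha₁ ha₂
  have hc₁ : ((p * n₁ + a₁ : ℕ) : ℚ_[p]) = (p : ℚ_[p]) * n₁ + a₁ := by push_cast; ring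
  have hc₂ : ((p * n₂ + a₂ : ℕ) : ℚ_[p]) = (p : ℚ_[p]) * n₂ + a₂ := by push_cast; ring
  rw [hc₁, hc₂, one_div, mul_inv, ← one_div, ← one_div,
    inv_pow_expansion s₁ hs₁ ha₁.1 hd₁ n₁, inv_pow_expansion s₂ hs₂ ha₂.1 hd₂ n₂]
  exact tsum_mul_tsum_of_summable_norm
    (summable_norm_eterm s₁ ha₁.1 hd₁ n₁) (summable_norm_eterm s₂ ha₂.1 hd₂ n₂)

lemma sum_eterm (s l n : ℕ) :
    (∑ a ∈ Ioo 0 p, eterm p s a n l)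
      = (negBinom s l : ℚ_[p]) * (p : ℚ_[p]) ^ l * (n : ℚ_[p]) ^ l * H1 p p (s + l) := by
  rw [H1, Finset.mul_sum]
  exact Finset.sum_congr rfl fun a _ => rfl

lemma per_x (s₁ s₂ M l₁ l₂ : ℕ) :
    (∑ n₂ ∈ range M, ∑ a₂ ∈ Ioo 0 p,
        ((∑ n₁ ∈ range n₂, ∑ a₁ ∈ Ioo 0 p, eterm p s₁ a₁ n₁ l₁ * eterm p s₂ a₂ n₂ l₂)
          + ∑ a₁ ∈ Ioo 0 a₂, eterm p s₁ a₁ n₂ l₁ * eterm p s₂ a₂ n₂ l₂))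
      = (p : ℚ_[p]) ^ (l₁ + l₂) * (negBinom s₁ l₁ : ℚ_[p]) * (negBinom s₂ l₂ : ℚ_[p]) *
          ((∑ n₂ ∈ range M, ∑ n₁ ∈ range n₂, (n₁ : ℚ_[p]) ^ l₁ * (n₂ : ℚ_[p]) ^ l₂)
              * H1 p p (s₁ + l₁) * H1 p p (s₂ + l₂)
            + (∑ n ∈ range M, (n : ℚ_[p]) ^ (l₁ + l₂)) * H2 p p (s₁ + l₁) (s₂ + l₂)) := by
  have h1 : ∀ n₂ a₂ : ℕ,
      (∑ n₁ ∈ range n₂, ∑ a₁ ∈ Ioo 0 p, eterm p s₁ a₁ n₁ l₁ * eterm p s₂ a₂ n₂ l₂)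
        = ((negBinom s₁ l₁ : ℚ_[p]) * (p : ℚ_[p]) ^ l₁ * H1 p p (s₁ + l₁)
            * (∑ n₁ ∈ range n₂, (n₁ : ℚ_[p]) ^ l₁)) * eterm p s₂ a₂ n₂ l₂ := by
    intro n₂ a₂
    calc (∑ n₁ ∈ range n₂, ∑ a₁ ∈ Ioo 0 p, eterm p s₁ a₁ n₁ l₁ * eterm p s₂ a₂ n₂ l₂)
        = ∑ n₁ ∈ range n₂,
            ((negBinom s₁ l₁ : ℚ_[p]) * (p : ℚ_[p]) ^ l₁ * (n₁ : ℚ_[p]) ^ l₁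
              * H1 p p (s₁ + l₁)) * eterm p s₂ a₂ n₂ l₂ :=
          Finset.sum_congr rfl fun n₁ _ => by rw [← Finset.sum_mul, sum_eterm]
      _ = _ := by
          rw [Finset.mul_sum, Finset.sum_mul]
          exact Finset.sum_congr rfl fun n₁ _ => by ring
  have h2 : ∀ n₂ : ℕ,
      (∑ a₂ ∈ Ioo 0 p, ∑ a₁ ∈ Ioo 0 a₂, eterm p s₁ a₁ n₂ l₁ * eterm p s₂ a₂ n₂ l₂)
        = (negBinom s₁ l₁ : ℚ_[p]) * (negBinom s₂ l₂ : ℚ_[p]) * (p : ℚ_[p]) ^ (l₁ + l₂)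
            * (n₂ : ℚ_[p]) ^ (l₁ + l₂) * H2 p p (s₁ + l₁) (s₂ + l₂) := by
    intro n₂
    rw [H2, Finset.mul_sum]
    apply Finset.sum_congr rfl
    intro a₂ _
    rw [Finset.mul_sum]
    apply Finset.sum_congr rfl
    intro a₁ _
    simp only [eterm]
    rw [one_div ((a₁ : ℚ_[p]) ^ (s₁ + l₁) * (a₂ : ℚ_[p]) ^ (s₂ + l₂)), mul_inv]
    simp only [← one_div]
    ring
  calc (∑ n₂ ∈ range M, ∑ a₂ ∈ Ioo 0 p,
        ((∑ n₁ ∈ range n₂, ∑ a₁ ∈ Ioo 0 p, eterm p s₁ a₁ n₁ l₁ * eterm p s₂ a₂ n₂ l₂)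
          + ∑ a₁ ∈ Ioo 0 a₂, eterm p s₁ a₁ n₂ l₁ * eterm p s₂ a₂ n₂ l₂))
      = ∑ n₂ ∈ range M,
          ((∑ a₂ ∈ Ioo 0 p, ((negBinom s₁ l₁ : ℚ_[p]) * (p : ℚ_[p]) ^ l₁ * H1 p p (s₁ + l₁)
              * (∑ n₁ ∈ range n₂, (n₁ : ℚ_[p]) ^ l₁)) * eterm p s₂ a₂ n₂ l₂)
            + ∑ a₂ ∈ Ioo 0 p, ∑ a₁ ∈ Ioo 0 a₂, eterm p s₁ a₁ n₂ l₁ * eterm p s₂ a₂ n₂ l₂) := by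
        apply Finset.sum_congr rfl
        intro n₂ _
        rw [Finset.sum_add_distrib]
        congr 1
        exact Finset.sum_congr rfl fun a₂ _ => h1 n₂ a₂
    _ = ∑ n₂ ∈ range M,
          (((negBinom s₁ l₁ : ℚ_[p]) * (p : ℚ_[p]) ^ l₁ * H1 p p (s₁ + l₁)
              * (∑ n₁ ∈ range n₂, (n₁ : ℚ_[p]) ^ l₁))
            * ((negBinom s₂ l₂ : ℚ_[p]) * (p : ℚ_[p]) ^ l₂ * (n₂ : ℚ_[p]) ^ l₂
                * H1 p p (s₂ + l₂))
          + (negBinom s₁ l₁ : ℚ_[p]) * (negBinom s₂ l₂ : ℚ_[p]) * (p : ℚ_[p]) ^ (l₁ + l₂)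
              * (n₂ : ℚ_[p]) ^ (l₁ + l₂) * H2 p p (s₁ + l₁) (s₂ + l₂)) := by
        apply Finset.sum_congr rfl
        intro n₂ _
        rw [← Finset.mul_sum, sum_eterm, h2 n₂]
    _ = _ := by
        rw [mul_add, Finset.sum_add_distrib]
        congr 1
        · conv_rhs => rw [Finset.sum_mul, Finset.sum_mul, Finset.mul_sum]
          apply Finset.sum_congr rfl
          intro n₂ _
          rw [← Finset.sum_mul]
          ring
        · conv_rhs => rw [Finset.sum_mul, Finset.mul_sum]
          apply Finset.sum_congr rfl
          intro n₂ _
          ring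

lemma summable_inner (s₁ s₂ : ℕ) {a₂ : ℕ} (ha₂ : a₂ ∈ Ioo 0 p) (n₂ : ℕ) :
    Summable (fun x : ℕ × ℕ =>
      (∑ n₁ ∈ range n₂, ∑ a₁ ∈ Ioo 0 p, eterm p s₁ a₁ n₁ x.1 * eterm p s₂ a₂ n₂ x.2)
        + ∑ a₁ ∈ Ioo 0 a₂, eterm p s₁ a₁ n₂ x.1 * eterm p s₂ a₂ n₂ x.2) := by
  apply Summable.add
  · exact summable_sum fun n₁ _ => summable_sum fun a₁ ha₁ =>
      summable_eterm_pair s₁ s₂ ha₁ ha₂ n₁ n₂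
  · refine summable_sum fun a₁ ha₁ => summable_eterm_pair s₁ s₂ ?_ ha₂ n₂ n₂
    simp only [mem_Ioo] at ha₁ ha₂ ⊢
    omega

lemma T_expand (s₁ s₂ : ℕ) (hs₁ : 1 ≤ s₁) (hs₂ : 1 ≤ s₂) (M : ℕ) :
    (∑ m₂ ∈ (Ioo 0 (p * M)).filter (fun m => ¬ p ∣ m),
        ∑ m₁ ∈ (Ioo 0 m₂).filter (fun m => ¬ p ∣ m),
          1 / ((m₁ : ℚ_[p]) ^ s₁ * (m₂ : ℚ_[p]) ^ s₂))
      = ∑' x : ℕ × ℕ, (p : ℚ_[p]) ^ (x.1 + x.2) * (negBinom s₁ x.1 : ℚ_[p]) *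
          (negBinom s₂ x.2 : ℚ_[p]) *
          ((∑ n₂ ∈ range M, ∑ n₁ ∈ range n₂, (n₁ : ℚ_[p]) ^ x.1 * (n₂ : ℚ_[p]) ^ x.2)
              * H1 p p (s₁ + x.1) * H1 p p (s₂ + x.2)
            + (∑ n ∈ range M, (n : ℚ_[p]) ^ (x.1 + x.2)) * H2 p p (s₁ + x.1) (s₂ + x.2)) := by
  rw [unit_sum_reindex (fun m₂ => ∑ m₁ ∈ (Ioo 0 m₂).filter (fun m => ¬ p ∣ m),
    1 / ((m₁ : ℚ_[p]) ^ s₁ * (m₂ : ℚ_[p]) ^ s₂)) M]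
  have key : ∀ n₂ ∈ range M, ∀ a₂ ∈ Ioo 0 p,
      (∑ m₁ ∈ (Ioo 0 (p * n₂ + a₂)).filter (fun m => ¬ p ∣ m),
          1 / ((m₁ : ℚ_[p]) ^ s₁ * ((p * n₂ + a₂ : ℕ) : ℚ_[p]) ^ s₂))
        = ∑' x : ℕ × ℕ,
            ((∑ n₁ ∈ range n₂, ∑ a₁ ∈ Ioo 0 p, eterm p s₁ a₁ n₁ x.1 * eterm p s₂ a₂ n₂ x.2)
              + ∑ a₁ ∈ Ioo 0 a₂, eterm p s₁ a₁ n₂ x.1 * eterm p s₂ a₂ n₂ x.2) := by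
    intro n₂ _ a₂ ha₂
    have ha₂' := mem_Ioo.mp ha₂
    rw [unit_sum_reindex' (fun m₁ => 1 / ((m₁ : ℚ_[p]) ^ s₁ * ((p * n₂ + a₂ : ℕ) : ℚ_[p]) ^ s₂))
      ha₂'.1 ha₂'.2]
    have step1 : (∑ n₁ ∈ range n₂, ∑ a₁ ∈ Ioo 0 p,
        1 / (((p * n₁ + a₁ : ℕ) : ℚ_[p]) ^ s₁ * ((p * n₂ + a₂ : ℕ) : ℚ_[p]) ^ s₂))
        = ∑' x : ℕ × ℕ, ∑ n₁ ∈ range n₂, ∑ a₁ ∈ Ioo 0 p,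
            eterm p s₁ a₁ n₁ x.1 * eterm p s₂ a₂ n₂ x.2 := by
      rw [Finset.sum_congr rfl (fun n₁ _ => Finset.sum_congr rfl (fun a₁ ha₁ =>
        expand_pair s₁ s₂ hs₁ hs₂ ha₁ ha₂ n₁ n₂))]
      rw [Finset.sum_congr rfl (fun n₁ (_ : n₁ ∈ range n₂) =>
        (Summable.tsum_finsetSum (fun a₁ ha₁ => summable_eterm_pair s₁ s₂ ha₁ ha₂ n₁ n₂)).symm)]
      exact (Summable.tsum_finsetSum (fun n₁ _ => summable_sum
        (fun a₁ ha₁ => summable_eterm_pair s₁ s₂ ha₁ ha₂ n₁ n₂))).symm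
    have step2 : (∑ a₁ ∈ Ioo 0 a₂,
        1 / (((p * n₂ + a₁ : ℕ) : ℚ_[p]) ^ s₁ * ((p * n₂ + a₂ : ℕ) : ℚ_[p]) ^ s₂))
        = ∑' x : ℕ × ℕ, ∑ a₁ ∈ Ioo 0 a₂,
            eterm p s₁ a₁ n₂ x.1 * eterm p s₂ a₂ n₂ x.2 := by
      have hmem : ∀ a₁ ∈ Ioo 0 a₂, a₁ ∈ Ioo 0 p := by
        intro a₁ ha₁
        simp only [mem_Ioo] at ha₁ ⊢
        omega
      rw [Finset.sum_congr rfl (fun a₁ ha₁ =>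
        expand_pair s₁ s₂ hs₁ hs₂ (hmem a₁ ha₁) ha₂ n₂ n₂)]
      exact (Summable.tsum_finsetSum (fun a₁ ha₁ => summable_eterm_pair s₁ s₂ (hmem a₁ ha₁) ha₂ n₂ n₂)).symm
    rw [step1, step2]
    rw [← Summable.tsum_add
      (summable_sum fun n₁ _ => summable_sum fun a₁ ha₁ =>
        summable_eterm_pair s₁ s₂ ha₁ ha₂ n₁ n₂)
      (summable_sum fun a₁ ha₁ => summable_eterm_pair s₁ s₂ (by
        simp only [mem_Ioo] at ha₁ ha₂' ⊢
        exact ⟨ha₁.1, by omega⟩) ha₂ n₂ n₂)]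
  rw [Finset.sum_congr rfl (fun n₂ hn₂ => Finset.sum_congr rfl (fun a₂ ha₂ => key n₂ hn₂ a₂ ha₂))]
  rw [Finset.sum_congr rfl (fun n₂ (hn₂ : n₂ ∈ range M) =>
    (Summable.tsum_finsetSum (fun a₂ ha₂ => summable_inner s₁ s₂ ha₂ n₂)).symm)]
  rw [(Summable.tsum_finsetSum (fun n₂ _ => summable_sum
    (fun a₂ ha₂ => summable_inner s₁ s₂ ha₂ n₂))).symm]
  exact tsum_congr fun x => per_x s₁ s₂ M x.1 x.2

noncomputable def Wfun (p : ℕ) [Fact p.Prime] (s₁ s₂ M : ℕ) (x : ℕ × ℕ) : ℚ_[p] :=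
  (p : ℚ_[p]) ^ (x.1 + x.2) * (negBinom s₁ x.1 : ℚ_[p]) * (negBinom s₂ x.2 : ℚ_[p]) *
    ((∑ n₂ ∈ range M, ∑ n₁ ∈ range n₂, (n₁ : ℚ_[p]) ^ x.1 * (n₂ : ℚ_[p]) ^ x.2)
        * H1 p p (s₁ + x.1) * H1 p p (s₂ + x.2)
      + (∑ n ∈ range M, (n : ℚ_[p]) ^ (x.1 + x.2)) * H2 p p (s₁ + x.1) (s₂ + x.2))

lemma H1_norm_le (s : ℕ) : ‖H1 p p s‖ ≤ (p : ℝ) := by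
  rw [H1]
  refine le_trans (norm_sum_le _ _) ?_
  have h : ∀ a ∈ Ioo 0 p, ‖1 / (a : ℚ_[p]) ^ s‖ = 1 := by
    intro a ha
    rw [norm_div, norm_one, norm_pow,
      norm_coe_unit_eq_one (mem_Ioo.mp ha).1 (not_dvd_of_mem_Ioo ha), one_pow, div_one]
  rw [Finset.sum_congr rfl h, Finset.sum_const, Nat.card_Ioo, nsmul_eq_mul, mul_one]
  have : p - 0 - 1 ≤ p := by omega
  exact_mod_cast this

lemma H2_norm_le (s₁ s₂ : ℕ) : ‖H2 p p s₁ s₂‖ ≤ (p : ℝ) * p := by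
  rw [H2]
  refine le_trans (norm_sum_le _ _) ?_
  have h : ∀ a₂ ∈ Ioo 0 p, ‖∑ a₁ ∈ Ioo 0 a₂, 1 / ((a₁ : ℚ_[p]) ^ s₁ * (a₂ : ℚ_[p]) ^ s₂)‖
      ≤ (p : ℝ) := by
    intro a₂ ha₂
    refine le_trans (norm_sum_le _ _) ?_
    have h' : ∀ a₁ ∈ Ioo 0 a₂, ‖1 / ((a₁ : ℚ_[p]) ^ s₁ * (a₂ : ℚ_[p]) ^ s₂)‖ = 1 := by
      intro a₁ ha₁
      have ha₁' : a₁ ∈ Ioo 0 p := by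
        simp only [mem_Ioo] at ha₁ ha₂ ⊢
        omega
      rw [norm_div, norm_one, norm_mul, norm_pow, norm_pow,
        norm_coe_unit_eq_one (mem_Ioo.mp ha₁').1 (not_dvd_of_mem_Ioo ha₁'),
        norm_coe_unit_eq_one (mem_Ioo.mp ha₂).1 (not_dvd_of_mem_Ioo ha₂)]
      simp
    rw [Finset.sum_congr rfl h', Finset.sum_const, Nat.card_Ioo, nsmul_eq_mul, mul_one]
    have h2 : a₂ - 0 - 1 ≤ p := by
      have := (mem_Ioo.mp ha₂).2
      omega
    exact_mod_cast h2
  refine le_trans (Finset.sum_le_sum h) ?_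
  rw [Finset.sum_const, Nat.card_Ioo, nsmul_eq_mul]
  have h3 : ((p - 0 - 1 : ℕ) : ℝ) ≤ (p : ℝ) := by
    have : p - 0 - 1 ≤ p := by omega
    exact_mod_cast this
  have hp0 : (0:ℝ) ≤ (p:ℝ) := by positivity
  nlinarith

lemma Wfun_norm_le (s₁ s₂ M : ℕ) (x : ℕ × ℕ) :
    ‖Wfun p s₁ s₂ M x‖ ≤ (‖(p : ℚ_[p])‖ ^ x.1 * ‖(p : ℚ_[p])‖ ^ x.2) * (2 * p * p) := by
  have hA : ‖(∑ n₂ ∈ range M, ∑ n₁ ∈ range n₂, (n₁ : ℚ_[p]) ^ x.1 * (n₂ : ℚ_[p]) ^ x.2)‖ ≤ 1 := by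
    have : (∑ n₂ ∈ range M, ∑ n₁ ∈ range n₂, (n₁ : ℚ_[p]) ^ x.1 * (n₂ : ℚ_[p]) ^ x.2)
        = ((∑ n₂ ∈ range M, ∑ n₁ ∈ range n₂, n₁ ^ x.1 * n₂ ^ x.2 : ℕ) : ℚ_[p]) := by
      push_cast; rfl
    rw [this]; exact norm_nat_le_one _
  have hB : ‖(∑ n ∈ range M, (n : ℚ_[p]) ^ (x.1 + x.2))‖ ≤ 1 := by
    have : (∑ n ∈ range M, (n : ℚ_[p]) ^ (x.1 + x.2))
        = ((∑ n ∈ range M, n ^ (x.1 + x.2) : ℕ) : ℚ_[p]) := by push_cast; rfl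
    rw [this]; exact norm_nat_le_one _
  have hb₁ : ‖((negBinom s₁ x.1 : ℤ) : ℚ_[p])‖ ≤ 1 := Padic.norm_int_le_one _
  have hb₂ : ‖((negBinom s₂ x.2 : ℤ) : ℚ_[p])‖ ≤ 1 := Padic.norm_int_le_one _
  have hH₁ := H1_norm_le (p := p) (s₁ + x.1)
  have hH₂ := H1_norm_le (p := p) (s₂ + x.2)
  have hH3 := H2_norm_le (p := p) (s₁ + x.1) (s₂ + x.2)
  have hp0 : (0:ℝ) < (p:ℝ) := by exact_mod_cast hp.out.pos
  have hinner : ‖(∑ n₂ ∈ range M, ∑ n₁ ∈ range n₂, (n₁ : ℚ_[p]) ^ x.1 * (n₂ : ℚ_[p]) ^ x.2)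
        * H1 p p (s₁ + x.1) * H1 p p (s₂ + x.2)
      + (∑ n ∈ range M, (n : ℚ_[p]) ^ (x.1 + x.2)) * H2 p p (s₁ + x.1) (s₂ + x.2)‖
      ≤ 2 * p * p := by
    refine le_trans (norm_add_le _ _) ?_
    have t1 : ‖(∑ n₂ ∈ range M, ∑ n₁ ∈ range n₂, (n₁ : ℚ_[p]) ^ x.1 * (n₂ : ℚ_[p]) ^ x.2)
        * H1 p p (s₁ + x.1) * H1 p p (s₂ + x.2)‖ ≤ (p:ℝ) * p := by
      rw [norm_mul, norm_mul]
      calc ‖_‖ * ‖H1 p p (s₁ + x.1)‖ * ‖H1 p p (s₂ + x.2)‖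
          ≤ 1 * (p:ℝ) * (p:ℝ) := by gcongr <;> simp [norm_nonneg]
        _ = (p:ℝ) * p := by ring
    have t2 : ‖(∑ n ∈ range M, (n : ℚ_[p]) ^ (x.1 + x.2)) * H2 p p (s₁ + x.1) (s₂ + x.2)‖
        ≤ (p:ℝ) * p := by
      rw [norm_mul]
      calc ‖_‖ * ‖H2 p p (s₁ + x.1) (s₂ + x.2)‖ ≤ 1 * ((p:ℝ) * p) := by
            gcongr <;> simp [norm_nonneg]
        _ = (p:ℝ) * p := by ring
    nlinarith
  calc ‖Wfun p s₁ s₂ M x‖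
      = ‖(p : ℚ_[p])‖ ^ (x.1 + x.2) * ‖((negBinom s₁ x.1 : ℤ) : ℚ_[p])‖
          * ‖((negBinom s₂ x.2 : ℤ) : ℚ_[p])‖ * ‖_ + _‖ := by
        rw [Wfun, norm_mul, norm_mul, norm_mul, norm_pow]
    _ ≤ ‖(p : ℚ_[p])‖ ^ (x.1 + x.2) * 1 * 1 * (2 * p * p) := by
        gcongr <;> first | exact norm_nonneg _ | positivity | assumption
    _ = (‖(p : ℚ_[p])‖ ^ x.1 * ‖(p : ℚ_[p])‖ ^ x.2) * (2 * p * p) := by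
        rw [pow_add]; ring

lemma summable_Wfun (s₁ s₂ M : ℕ) : Summable (Wfun p s₁ s₂ M) := by
  have hplt : ‖(p : ℚ_[p])‖ < 1 := Padic.norm_p_lt_one
  have hgeo : Summable (fun l : ℕ => ‖(p : ℚ_[p])‖ ^ l) :=
    summable_geometric_of_lt_one (norm_nonneg _) hplt
  have hprod : Summable (fun x : ℕ × ℕ => ‖(p : ℚ_[p])‖ ^ x.1 * ‖(p : ℚ_[p])‖ ^ x.2) :=
    hgeo.mul_of_nonneg hgeo (fun l => by positivity) (fun l => by positivity)
  exact Summable.of_norm_bounded (hprod.mul_right ((2:ℝ) * p * p))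
    (fun x => Wfun_norm_le s₁ s₂ M x)

lemma pow_ne_one_of_pos {m : ℕ} (hm : 1 ≤ m) : (p : ℚ_[p]) ^ m ≠ 1 := by
  intro h
  have hn := congrArg (fun y : ℚ_[p] => ‖y‖) h
  simp only [norm_pow, norm_one] at hn
  have h1 : ‖(p : ℚ_[p])‖ < 1 := Padic.norm_p_lt_one
  have h2 : ‖(p : ℚ_[p])‖ ^ m < 1 := by
    apply pow_lt_one₀ (norm_nonneg _) h1 (by omega)
  rw [hn] at h2
  exact lt_irrefl _ h2

lemma F_decomp (k s₁ s₂ : ℕ) (x : ℕ × ℕ) :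
    (∑ u ∈ Finset.Icc 1 (x.1 + x.2 + 2),
        (((p : ℚ_[p]) ^ ((u + s₁ + s₂) * k) - 1) / ((p : ℚ_[p]) ^ (u + s₁ + s₂) - 1)) *
          (p : ℚ_[p]) ^ (x.1 + x.2) * (negBinom s₁ x.1 : ℚ_[p]) * (negBinom s₂ x.2 : ℚ_[p]) *
          ((faulhaberB2 u x.2 x.1 : ℚ_[p]) * H1 p p (s₁ + x.1) * H1 p p (s₂ + x.2) +
            (faulhaberB u (x.1 + x.2) : ℚ_[p]) * H2 p p (s₁ + x.1) (s₂ + x.2)))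
      = ∑ r ∈ range k, (p : ℚ_[p]) ^ (r * (s₁ + s₂)) * Wfun p s₁ s₂ (p ^ r) x := by
  have step : ∀ u ∈ Finset.Icc 1 (x.1 + x.2 + 2),
      (((p : ℚ_[p]) ^ ((u + s₁ + s₂) * k) - 1) / ((p : ℚ_[p]) ^ (u + s₁ + s₂) - 1)) *
          (p : ℚ_[p]) ^ (x.1 + x.2) * (negBinom s₁ x.1 : ℚ_[p]) * (negBinom s₂ x.2 : ℚ_[p]) *
          ((faulhaberB2 u x.2 x.1 : ℚ_[p]) * H1 p p (s₁ + x.1) * H1 p p (s₂ + x.2) +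
            (faulhaberB u (x.1 + x.2) : ℚ_[p]) * H2 p p (s₁ + x.1) (s₂ + x.2))
        = ∑ r ∈ range k, ((p : ℚ_[p]) ^ (u + s₁ + s₂)) ^ r *
            ((p : ℚ_[p]) ^ (x.1 + x.2) * (negBinom s₁ x.1 : ℚ_[p]) * (negBinom s₂ x.2 : ℚ_[p]) *
            ((faulhaberB2 u x.2 x.1 : ℚ_[p]) * H1 p p (s₁ + x.1) * H1 p p (s₂ + x.2) +
              (faulhaberB u (x.1 + x.2) : ℚ_[p]) * H2 p p (s₁ + x.1) (s₂ + x.2))) := by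
    intro u hu
    have hu1 : 1 ≤ u + s₁ + s₂ := by
      simp only [mem_Icc] at hu
      omega
    rw [pow_mul, ← geom_sum_eq (pow_ne_one_of_pos hu1) k]
    rw [Finset.sum_mul, Finset.sum_mul, Finset.sum_mul, Finset.sum_mul]
    exact Finset.sum_congr rfl fun r _ => by ring
  rw [Finset.sum_congr rfl step, Finset.sum_comm]
  apply Finset.sum_congr rfl
  intro r _
  rw [Wfun]
  rw [faulhaber2_padic (p ^ r) x.1 x.2,
    faulhaber_padic (p ^ r) (x.1 + x.2) (x.1 + x.2 + 2) (by omega)]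
  conv_rhs => rw [Finset.sum_mul, Finset.sum_mul, Finset.sum_mul, ← Finset.sum_add_distrib,
    Finset.mul_sum, Finset.mul_sum]
  apply Finset.sum_congr rfl
  intro u _
  have hcast : ((p ^ r : ℕ) : ℚ_[p]) = (p : ℚ_[p]) ^ r := by push_cast; rfl
  rw [hcast]
  ring


end Aux


/-- The part `v_p(n_1) = v_p(n_2)` of the depth-two sum:
`(p^k)^{s_1+s_2}·∑_{0<n_1<n_2<p^k, v_p(n_1)=v_p(n_2)} n_1^{−s_1} n_2^{−s_2}
 = p^{s_1+s_2}·∑_{l_1,l_2≥0} ∑_{u=1}^{l_1+l_2+2} ((p^{(u+s_1+s_2)k}−1)/(p^{u+s_1+s_2}−1))·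
   p^{l_1+l_2}·binom(−s_1,l_1)·binom(−s_2,l_2)·
   (𝔹_u^{l_2,l_1}·H_p(s_1+l_1)·H_p(s_2+l_2) + 𝔹_u^{l_1+l_2}·H_p(s_2+l_2,s_1+l_1))`,
the family indexed by `(l_1,l_2)` being summable in `ℚ_p`. -/
theorem depth_two_equal_valuation_part (p : ℕ) [Fact p.Prime] (k s₁ s₂ : ℕ)
    (hk : 1 ≤ k) (hs₁ : 1 ≤ s₁) (hs₂ : 1 ≤ s₂) :
    Summable (fun x : ℕ × ℕ =>
        ∑ u ∈ Finset.Icc 1 (x.1 + x.2 + 2),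
          (((p : ℚ_[p]) ^ ((u + s₁ + s₂) * k) - 1) / ((p : ℚ_[p]) ^ (u + s₁ + s₂) - 1)) *
            (p : ℚ_[p]) ^ (x.1 + x.2) * (negBinom s₁ x.1 : ℚ_[p]) * (negBinom s₂ x.2 : ℚ_[p]) *
            ((faulhaberB2 u x.2 x.1 : ℚ_[p]) * H1 p p (s₁ + x.1) * H1 p p (s₂ + x.2) +
              (faulhaberB u (x.1 + x.2) : ℚ_[p]) * H2 p p (s₁ + x.1) (s₂ + x.2))) ∧
    ((p : ℚ_[p]) ^ k) ^ (s₁ + s₂) *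
        (∑ n₂ ∈ Finset.Ioo 0 (p ^ k),
          ∑ n₁ ∈ (Finset.Ioo 0 n₂).filter (fun n₁ => padicValNat p n₁ = padicValNat p n₂),
            1 / ((n₁ : ℚ_[p]) ^ s₁ * (n₂ : ℚ_[p]) ^ s₂))
      = (p : ℚ_[p]) ^ (s₁ + s₂) *
          ∑' x : ℕ × ℕ,
            ∑ u ∈ Finset.Icc 1 (x.1 + x.2 + 2),
              (((p : ℚ_[p]) ^ ((u + s₁ + s₂) * k) - 1) / ((p : ℚ_[p]) ^ (u + s₁ + s₂) - 1)) *
                (p : ℚ_[p]) ^ (x.1 + x.2) * (negBinom s₁ x.1 : ℚ_[p]) *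
                (negBinom s₂ x.2 : ℚ_[p]) *
                ((faulhaberB2 u x.2 x.1 : ℚ_[p]) * H1 p p (s₁ + x.1) * H1 p p (s₂ + x.2) +
                  (faulhaberB u (x.1 + x.2) : ℚ_[p]) * H2 p p (s₁ + x.1) (s₂ + x.2)) := by
  have hpp : p.Prime := Fact.out
  have hpne : (p : ℚ_[p]) ≠ 0 := Nat.cast_ne_zero.mpr hpp.ne_zero
  constructor
  · exact Summable.congr
      (summable_sum fun r (_ : r ∈ range k) =>
        ((summable_Wfun (p := p) s₁ s₂ (p ^ r)).mul_left ((p : ℚ_[p]) ^ (r * (s₁ + s₂)))))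
      (fun x => (F_decomp k s₁ s₂ x).symm)
  · have h1 : (∑' x : ℕ × ℕ,
        ∑ u ∈ Finset.Icc 1 (x.1 + x.2 + 2),
          (((p : ℚ_[p]) ^ ((u + s₁ + s₂) * k) - 1) / ((p : ℚ_[p]) ^ (u + s₁ + s₂) - 1)) *
            (p : ℚ_[p]) ^ (x.1 + x.2) * (negBinom s₁ x.1 : ℚ_[p]) *
            (negBinom s₂ x.2 : ℚ_[p]) *
            ((faulhaberB2 u x.2 x.1 : ℚ_[p]) * H1 p p (s₁ + x.1) * H1 p p (s₂ + x.2) +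
              (faulhaberB u (x.1 + x.2) : ℚ_[p]) * H2 p p (s₁ + x.1) (s₂ + x.2)))
        = ∑ r ∈ range k, (p : ℚ_[p]) ^ (r * (s₁ + s₂)) *
            ∑' x : ℕ × ℕ, Wfun p s₁ s₂ (p ^ r) x := by
      rw [tsum_congr (F_decomp k s₁ s₂)]
      rw [Summable.tsum_finsetSum (fun r _ =>
        (summable_Wfun (p := p) s₁ s₂ (p ^ r)).mul_left ((p : ℚ_[p]) ^ (r * (s₁ + s₂))))]
      exact Finset.sum_congr rfl fun r _ => tsum_mul_left
    rw [h1]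
    have hT : ∀ r : ℕ, (∑' x : ℕ × ℕ, Wfun p s₁ s₂ (p ^ r) x)
        = ∑ m₂ ∈ (Ioo 0 (p ^ (r + 1))).filter (fun m => ¬ p ∣ m),
            ∑ m₁ ∈ (Ioo 0 m₂).filter (fun m => ¬ p ∣ m),
              1 / ((m₁ : ℚ_[p]) ^ s₁ * (m₂ : ℚ_[p]) ^ s₂) := by
      intro r
      rw [pow_succ']
      rw [T_expand s₁ s₂ hs₁ hs₂ (p ^ r)]
      exact tsum_congr fun x => rfl
    rw [val_decomp k (fun n₁ n₂ => 1 / ((n₁ : ℚ_[p]) ^ s₁ * (n₂ : ℚ_[p]) ^ s₂))]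
    have hDj : ∀ j ∈ range k,
        (∑ m₂ ∈ (Ioo 0 (p ^ (k - j))).filter (fun m => ¬ p ∣ m),
          ∑ m₁ ∈ (Ioo 0 m₂).filter (fun m => ¬ p ∣ m),
            1 / (((p ^ j * m₁ : ℕ) : ℚ_[p]) ^ s₁ * ((p ^ j * m₂ : ℕ) : ℚ_[p]) ^ s₂))
        = (1 / (p : ℚ_[p]) ^ (j * (s₁ + s₂))) *
            ∑ m₂ ∈ (Ioo 0 (p ^ (k - j))).filter (fun m => ¬ p ∣ m),
              ∑ m₁ ∈ (Ioo 0 m₂).filter (fun m => ¬ p ∣ m),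
                1 / ((m₁ : ℚ_[p]) ^ s₁ * (m₂ : ℚ_[p]) ^ s₂) := by
      intro j _
      rw [Finset.mul_sum]
      apply Finset.sum_congr rfl
      intro m₂ _
      rw [Finset.mul_sum]
      apply Finset.sum_congr rfl
      intro m₁ _
      push_cast
      rw [show ((p : ℚ_[p]) ^ j * m₁) ^ s₁ * ((p : ℚ_[p]) ^ j * m₂) ^ s₂
          = (p : ℚ_[p]) ^ (j * (s₁ + s₂)) * ((m₁ : ℚ_[p]) ^ s₁ * (m₂ : ℚ_[p]) ^ s₂) from by ring]
      rw [one_div ((p : ℚ_[p]) ^ (j * (s₁ + s₂)) * ((m₁ : ℚ_[p]) ^ s₁ * (m₂ : ℚ_[p]) ^ s₂)),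
        mul_inv]
      simp only [← one_div]
    rw [Finset.sum_congr rfl hDj, Finset.mul_sum]
    have hcollect : ∀ j ∈ range k,
        ((p : ℚ_[p]) ^ k) ^ (s₁ + s₂) * ((1 / (p : ℚ_[p]) ^ (j * (s₁ + s₂))) *
          ∑ m₂ ∈ (Ioo 0 (p ^ (k - j))).filter (fun m => ¬ p ∣ m),
            ∑ m₁ ∈ (Ioo 0 m₂).filter (fun m => ¬ p ∣ m),
              1 / ((m₁ : ℚ_[p]) ^ s₁ * (m₂ : ℚ_[p]) ^ s₂))
        = (p : ℚ_[p]) ^ ((k - j) * (s₁ + s₂)) *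
            ∑ m₂ ∈ (Ioo 0 (p ^ (k - j))).filter (fun m => ¬ p ∣ m),
              ∑ m₁ ∈ (Ioo 0 m₂).filter (fun m => ¬ p ∣ m),
                1 / ((m₁ : ℚ_[p]) ^ s₁ * (m₂ : ℚ_[p]) ^ s₂) := by
      intro j hj
      have hjk : j ≤ k := le_of_lt (mem_range.mp hj)
      have hsplit : ((p : ℚ_[p]) ^ k) ^ (s₁ + s₂)
          = (p : ℚ_[p]) ^ ((k - j) * (s₁ + s₂)) * (p : ℚ_[p]) ^ (j * (s₁ + s₂)) := by
        rw [← pow_mul, ← pow_add, ← add_mul, Nat.sub_add_cancel hjk]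
      rw [hsplit]
      have h0 : (p : ℚ_[p]) ^ (j * (s₁ + s₂)) ≠ 0 := pow_ne_zero _ hpne
      field_simp
    rw [Finset.sum_congr rfl hcollect, ← Finset.sum_range_reflect]
    rw [Finset.mul_sum]
    apply Finset.sum_congr rfl
    intro r hr
    have hr' : r < k := mem_range.mp hr
    have hidx : k - (k - 1 - r) = r + 1 := by omega
    rw [hidx, hT r]
    ring
end
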